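/- arXiv:2605.24070 — 2 statements merged into one kernel-verified Lean document; each statement's English description precedes it below -/
import Mathlib

section
/- Let d ∈ ℕ, let K be a symmetric positive semidefinite real d×d matrix, let γ > 0, and let (z_s, w_s)_{s∈[0,h]} be a continuously differentiable solution of the linear ODE system z′_s = w_s, w′_s = −γ w_s − K z_s on [0, h]. Then the map r ↦ ‖w_r‖² is twice differentiable on [0, h] with second derivative (d²/dr²)‖w_r‖² = 4γ²‖w_r‖² + 6γ ⟪w_r, K z_r⟫ + 2‖K z_r‖² − 2⟪w_r, K w_r⟫, and this second derivative satisfies the two-sided bounds (d²/dr²)‖w_r‖² ≤ 7γ²‖w_r‖² + 5‖K z_r‖² − 2⟪w_r, K w_r⟫ and (d²/dr²)‖w_r‖² ≥ −(1/4)‖K z_r‖² − 2⟪w_r, K w_r⟫ for all r ∈ [0, h]. -/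
open scoped InnerProductSpace

/-- along the deterministic flow `z′ = w`, `w′ = −γw − Kz` on `[0,h]`,
the map `r ↦ ‖w_r‖²` is twice differentiable on `[0,h]` with second derivative
`4γ²‖w_r‖² + 6γ⟪w_r, Kz_r⟫ + 2‖Kz_r‖² − 2⟪w_r, Kw_r⟫`, and this second derivative is
bounded above by `7γ²‖w_r‖² + 5‖Kz_r‖² − 2⟪w_r, Kw_r⟫` and below by
`−(1/4)‖Kz_r‖² − 2⟪w_r, Kw_r⟫`. -/
theorem second_derivative_speed_sq (d : ℕ)
    (K : EuclideanSpace ℝ (Fin d) →ₗ[ℝ] EuclideanSpace ℝ (Fin d))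
    (hKsym : ∀ z w : EuclideanSpace ℝ (Fin d), ⟪K z, w⟫_ℝ = ⟪z, K w⟫_ℝ)
    (hKpsd : ∀ z : EuclideanSpace ℝ (Fin d), 0 ≤ ⟪z, K z⟫_ℝ)
    (γ h : ℝ) (hγ : 0 < γ)
    (z w : ℝ → EuclideanSpace ℝ (Fin d))
    (hz : ∀ s ∈ Set.Icc (0 : ℝ) h, HasDerivAt z (w s) s)
    (hw : ∀ s ∈ Set.Icc (0 : ℝ) h, HasDerivAt w (-γ • w s - K (z s)) s) :
    ∃ f' : ℝ → ℝ,
      (∀ r ∈ Set.Icc (0 : ℝ) h,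
        HasDerivWithinAt (fun s => ‖w s‖ ^ 2) (f' r) (Set.Icc (0 : ℝ) h) r) ∧
      (∀ r ∈ Set.Icc (0 : ℝ) h,
        HasDerivWithinAt f'
          (4 * γ ^ 2 * ‖w r‖ ^ 2 + 6 * γ * ⟪w r, K (z r)⟫_ℝ + 2 * ‖K (z r)‖ ^ 2
            - 2 * ⟪w r, K (w r)⟫_ℝ) (Set.Icc (0 : ℝ) h) r) ∧
      (∀ r ∈ Set.Icc (0 : ℝ) h,
        4 * γ ^ 2 * ‖w r‖ ^ 2 + 6 * γ * ⟪w r, K (z r)⟫_ℝ + 2 * ‖K (z r)‖ ^ 2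
            - 2 * ⟪w r, K (w r)⟫_ℝ ≤
          7 * γ ^ 2 * ‖w r‖ ^ 2 + 5 * ‖K (z r)‖ ^ 2 - 2 * ⟪w r, K (w r)⟫_ℝ) ∧
      (∀ r ∈ Set.Icc (0 : ℝ) h,
        -(1 / 4) * ‖K (z r)‖ ^ 2 - 2 * ⟪w r, K (w r)⟫_ℝ ≤
          4 * γ ^ 2 * ‖w r‖ ^ 2 + 6 * γ * ⟪w r, K (z r)⟫_ℝ + 2 * ‖K (z r)‖ ^ 2
            - 2 * ⟪w r, K (w r)⟫_ℝ) := by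
  have hK : ∀ s ∈ Set.Icc (0 : ℝ) h, HasDerivAt (fun t => K (z t)) (K (w s)) s := by
    intro s hs
    exact (LinearMap.toContinuousLinearMap K).hasFDerivAt.comp_hasDerivAt s (hz s hs)
  have h1 : ∀ r ∈ Set.Icc (0 : ℝ) h,
      HasDerivAt (fun s => ‖w s‖ ^ 2)
        (-(2 * γ) * ‖w r‖ ^ 2 - 2 * ⟪w r, K (z r)⟫_ℝ) r := by
    intro r hr
    have := (hw r hr).inner ℝ (hw r hr)
    simp only [real_inner_self_eq_norm_sq] at this
    refine this.congr_deriv ?_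
    simp only [inner_sub_left, inner_sub_right, inner_smul_left, inner_smul_right,
      RCLike.inner_apply, starRingEnd_apply, star_trivial, real_inner_self_eq_norm_sq,
      real_inner_comm (w r) (K (z r))]
    ring
  refine ⟨fun r => -(2 * γ) * ‖w r‖ ^ 2 - 2 * ⟪w r, K (z r)⟫_ℝ,
    fun r hr => (h1 r hr).hasDerivWithinAt, fun r hr => ?_, fun r hr => ?_, fun r hr => ?_⟩
  · have h2 := ((h1 r hr).const_mul (-(2 * γ))).sub
      (((hw r hr).inner ℝ (hK r hr)).const_mul 2)
    refine (h2.congr_deriv ?_).hasDerivWithinAt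
    simp only [inner_sub_left, inner_smul_left, starRingEnd_apply, star_trivial,
      real_inner_self_eq_norm_sq]
    ring
  · nlinarith [abs_real_inner_le_norm (w r) (K (z r)), abs_le.mp (le_refl |⟪w r, K (z r)⟫_ℝ|),
      sq_nonneg (γ * ‖w r‖ - ‖K (z r)‖), sq_nonneg (γ * ‖w r‖ + ‖K (z r)‖),
      norm_nonneg (w r), norm_nonneg (K (z r)), hγ.le]
  · nlinarith [abs_real_inner_le_norm (w r) (K (z r)), abs_le.mp (le_refl |⟪w r, K (z r)⟫_ℝ|),
      sq_nonneg (2 * γ * ‖w r‖ - (3/2) * ‖K (z r)‖),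
      norm_nonneg (w r), norm_nonneg (K (z r)), hγ.le]
end

section
/- Let d ∈ ℕ, let K be a symmetric positive semidefinite real d×d matrix, let L_K > 0 satisfy ‖Kz‖ ≤ L_K‖z‖ for all z ∈ ℝ^d, let γ > 0, h > 0, and let (z_s, w_s)_{s∈[0,h]} be a continuously differentiable solution of the linear ODE system z′_s = w_s, w′_s = −γ w_s − K z_s on [0, h]. Then for every t ∈ [0, h] the trapezoidal defect satisfies ∫₀^t ((1/2)(‖w_t‖² + ‖w_0‖²) − ‖w_s‖²) ds ≤ (h²/2) ∫₀^t (7γ²‖w_r‖² + (11/2) L_K ⟪z_r, K z_r⟫ + 2 L_K ‖w_r‖²) dr. -/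
open scoped InnerProductSpace
open MeasureTheory Set intervalIntegral

set_option maxHeartbeats 1000000

/-- the trapezoidal defect bound along the deterministic flow
`z′ = w`, `w′ = −γw − Kz`: for every `t ∈ [0,h]`,
`∫₀ᵗ ((1/2)(‖w_t‖² + ‖w_0‖²) − ‖w_s‖²) ds
  ≤ (h²/2) ∫₀ᵗ (7γ²‖w_r‖² + (11/2)L_K⟪z_r,Kz_r⟫ + 2L_K‖w_r‖²) dr`. -/
theorem trapezoidal_defect_bound (d : ℕ)
    (K : EuclideanSpace ℝ (Fin d) →ₗ[ℝ] EuclideanSpace ℝ (Fin d))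
    (hKsym : ∀ z w : EuclideanSpace ℝ (Fin d), ⟪K z, w⟫_ℝ = ⟪z, K w⟫_ℝ)
    (hKpsd : ∀ z : EuclideanSpace ℝ (Fin d), 0 ≤ ⟪z, K z⟫_ℝ)
    (L_K : ℝ) (hLK : 0 < L_K)
    (hKup : ∀ z : EuclideanSpace ℝ (Fin d), ‖K z‖ ≤ L_K * ‖z‖)
    (γ h : ℝ) (hγ : 0 < γ) (hh : 0 < h)
    (z w : ℝ → EuclideanSpace ℝ (Fin d))
    (hz : ∀ s ∈ Set.Icc (0 : ℝ) h, HasDerivAt z (w s) s)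
    (hw : ∀ s ∈ Set.Icc (0 : ℝ) h, HasDerivAt w (-γ • w s - K (z s)) s)
    (t : ℝ) (ht : t ∈ Set.Icc (0 : ℝ) h) :
    (∫ s in (0:ℝ)..t, ((1 / 2) * (‖w t‖ ^ 2 + ‖w 0‖ ^ 2) - ‖w s‖ ^ 2)) ≤
      (h ^ 2 / 2) *
        ∫ r in (0:ℝ)..t,
          (7 * γ ^ 2 * ‖w r‖ ^ 2 + (11 / 2) * L_K * ⟪z r, K (z r)⟫_ℝ
            + 2 * L_K * ‖w r‖ ^ 2) := by
  obtain ⟨ht0, hth⟩ := ht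
  have hIcc : Set.Icc (0:ℝ) t ⊆ Set.Icc (0:ℝ) h := Set.Icc_subset_Icc le_rfl hth
  -- Cauchy–Schwarz for the PSD form
  have hCS : ∀ x y : EuclideanSpace ℝ (Fin d),
      ⟪x, K y⟫_ℝ ^ 2 ≤ ⟪x, K x⟫_ℝ * ⟪y, K y⟫_ℝ := by
    intro x y
    have hpoly : ∀ lam : ℝ,
        0 ≤ ⟪y, K y⟫_ℝ * (lam * lam) + (2 * ⟪x, K y⟫_ℝ) * lam + ⟪x, K x⟫_ℝ := by
      intro lam
      have h0 := hKpsd (x + lam • y)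
      have hxy : ⟪y, K x⟫_ℝ = ⟪x, K y⟫_ℝ := by
        rw [real_inner_comm, hKsym]
      have hexp : ⟪x + lam • y, K (x + lam • y)⟫_ℝ
          = ⟪x, K x⟫_ℝ + lam * ⟪x, K y⟫_ℝ + lam * ⟪y, K x⟫_ℝ
            + lam * lam * ⟪y, K y⟫_ℝ := by
        simp only [map_add, LinearMap.map_smul, inner_add_left, inner_add_right,
          real_inner_smul_left, real_inner_smul_right, smul_eq_mul]
        ring
      rw [hexp, hxy] at h0
      nlinarith [h0]
    have hd := discrim_le_zero hpoly
    rw [discrim] at hd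
    nlinarith [hd]
  -- ‖K x‖² ≤ L_K ⟪x, K x⟫
  have hKz2 : ∀ x : EuclideanSpace ℝ (Fin d), ‖K x‖ ^ 2 ≤ L_K * ⟪x, K x⟫_ℝ := by
    intro x
    have h1 : ⟪x, K (K x)⟫_ℝ = ‖K x‖ ^ 2 := by
      rw [← hKsym]; exact real_inner_self_eq_norm_sq _
    have h2 := hCS x (K x)
    rw [h1] at h2
    have h3 : ⟪K x, K (K x)⟫_ℝ ≤ ‖K x‖ * ‖K (K x)‖ := real_inner_le_norm _ _
    have h4 : ‖K (K x)‖ ≤ L_K * ‖K x‖ := hKup _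
    have h5 := hKpsd x
    have h6 : ⟪K x, K (K x)⟫_ℝ ≤ L_K * ‖K x‖ ^ 2 := by nlinarith [norm_nonneg (K x)]
    rcases eq_or_lt_of_le (norm_nonneg (K x)) with h0 | h0
    · rw [← h0]; nlinarith [h5, hLK.le]
    · nlinarith [h0, mul_pos h0 h0]
  -- abbreviations
  set f : ℝ → ℝ := fun s => ‖w s‖ ^ 2 with hfdef
  set f1 : ℝ → ℝ := fun s => -(2*γ) * ‖w s‖ ^ 2 - 2 * ⟪w s, K (z s)⟫_ℝ with hf1def
  set f2 : ℝ → ℝ := fun s => 4*γ^2*‖w s‖^2 + 6*γ*⟪w s, K (z s)⟫_ℝ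
      + 2*‖K (z s)‖^2 - 2*⟪w s, K (w s)⟫_ℝ with hf2def
  set G : ℝ → ℝ := fun r => 7 * γ ^ 2 * ‖w r‖ ^ 2 + (11 / 2) * L_K * ⟪z r, K (z r)⟫_ℝ
      + 2 * L_K * ‖w r‖ ^ 2 with hGdef
  -- continuity
  have hwA : ∀ s ∈ Set.Icc (0:ℝ) h, ContinuousAt w s := fun s hs => (hw s hs).continuousAt
  have hzA : ∀ s ∈ Set.Icc (0:ℝ) h, ContinuousAt z s := fun s hs => (hz s hs).continuousAt
  have hwC : ContinuousOn w (Set.Icc 0 h) := fun s hs => (hwA s hs).continuousWithinAt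
  have hzC : ContinuousOn z (Set.Icc 0 h) := fun s hs => (hzA s hs).continuousWithinAt
  have hKc : Continuous K := K.continuous_of_finiteDimensional
  have hfC : ContinuousOn f (Set.Icc 0 h) := (hwC.norm).pow 2
  have hf1C : ContinuousOn f1 (Set.Icc 0 h) := by
    apply ContinuousOn.sub
    · exact continuousOn_const.mul ((hwC.norm).pow 2)
    · exact continuousOn_const.mul (hwC.inner (hKc.comp_continuousOn hzC))
  have hf2C : ContinuousOn f2 (Set.Icc 0 h) := by
    apply ContinuousOn.sub
    · apply ContinuousOn.add
      · apply ContinuousOn.add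
        · exact continuousOn_const.mul ((hwC.norm).pow 2)
        · exact continuousOn_const.mul (hwC.inner (hKc.comp_continuousOn hzC))
      · exact continuousOn_const.mul (((hKc.comp_continuousOn hzC).norm).pow 2)
    · exact continuousOn_const.mul (hwC.inner (hKc.comp_continuousOn hwC))
  have hGC : ContinuousOn G (Set.Icc 0 h) := by
    apply ContinuousOn.add
    · apply ContinuousOn.add
      · exact continuousOn_const.mul ((hwC.norm).pow 2)
      · exact continuousOn_const.mul (hzC.inner (hKc.comp_continuousOn hzC))
    · exact continuousOn_const.mul ((hwC.norm).pow 2)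
  -- derivative of f
  have hfderiv : ∀ s ∈ Set.Icc (0:ℝ) h, HasDerivAt f (f1 s) s := by
    intro s hs
    have h1 := (hw s hs).inner ℝ (hw s hs)
    have heq : f = fun u => ⟪w u, w u⟫_ℝ := by
      funext u; rw [hfdef]; exact (real_inner_self_eq_norm_sq _).symm
    rw [heq]
    refine HasDerivAt.congr_deriv h1 ?_
    simp only [hf1def, inner_sub_left, inner_sub_right, real_inner_smul_left,
      real_inner_smul_right, neg_smul, inner_neg_left, inner_neg_right]
    rw [real_inner_self_eq_norm_sq, real_inner_comm (K (z s)) (w s)]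
    ring
  -- derivative of K ∘ z
  have hKzderiv : ∀ s ∈ Set.Icc (0:ℝ) h, HasDerivAt (fun u => K (z u)) (K (w s)) s := by
    intro s hs
    have := (K.toContinuousLinearMap.hasFDerivAt (x := z s)).comp_hasDerivAt s (hz s hs)
    exact this
  -- derivative of f1
  have hf1deriv : ∀ s ∈ Set.Icc (0:ℝ) h, HasDerivAt f1 (f2 s) s := by
    intro s hs
    have hB : HasDerivAt (fun u => ⟪w u, K (z u)⟫_ℝ)
        (⟪w s, K (w s)⟫_ℝ + ⟪-γ • w s - K (z s), K (z s)⟫_ℝ) s :=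
      (hw s hs).inner ℝ (hKzderiv s hs)
    have := ((hfderiv s hs).const_mul (-(2*γ))).sub (hB.const_mul 2)
    have heq : f1 = fun u => -(2*γ) * f u - 2 * ⟪w u, K (z u)⟫_ℝ := rfl
    rw [heq]
    refine HasDerivAt.congr_deriv this ?_
    simp only [hf2def, hf1def, inner_sub_left, real_inner_smul_left, neg_smul,
      inner_neg_left]
    rw [real_inner_self_eq_norm_sq]
    ring
  -- pointwise bound f2 ≤ G
  have hf2G : ∀ s ∈ Set.Icc (0:ℝ) h, f2 s ≤ G s := by
    intro s hs
    have h1 := hKz2 (z s)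
    have h2 : ⟪w s, K (z s)⟫_ℝ ≤ ‖w s‖ * ‖K (z s)‖ := real_inner_le_norm _ _
    have h3 := hKpsd (w s)
    have h4 := hKpsd (z s)
    simp only [hf2def, hGdef]
    nlinarith [norm_nonneg (w s), norm_nonneg (K (z s)),
      sq_nonneg (γ * ‖w s‖ - ‖K (z s)‖),
      mul_le_mul_of_nonneg_left h2 (by positivity : (0:ℝ) ≤ 6 * γ), hLK.le,
      mul_nonneg hLK.le (sq_nonneg ‖w s‖)]
  have hGnn : ∀ s, 0 ≤ G s := by
    intro s
    have h3 := hKpsd (z s)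
    simp only [hGdef]
    nlinarith [sq_nonneg ‖w s‖, hLK.le, mul_nonneg hLK.le h3,
      mul_nonneg hLK.le (sq_nonneg ‖w s‖), sq_nonneg γ,
      mul_nonneg (sq_nonneg γ) (sq_nonneg ‖w s‖)]
  -- D1 and its derivative
  set D1 : ℝ → ℝ := fun u => (1/2) * (f 0 - f u) + (u/2) * f1 u with hD1def
  have hD1deriv : ∀ u ∈ Set.Icc (0:ℝ) h, HasDerivAt D1 ((u/2) * f2 u) u := by
    intro u hu
    have h1 : HasDerivAt (fun v => (1/2) * (f 0 - f v)) ((1/2) * (0 - f1 u)) u :=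
      (((hasDerivAt_const u (f 0)).sub (hfderiv u hu)).const_mul (1/2))
    have hid : HasDerivAt (fun v : ℝ => v/2) (1/2) u := by
      simpa using (hasDerivAt_id u).div_const 2
    have h2 := hid.mul (hf1deriv u hu)
    have := h1.add h2
    refine HasDerivAt.congr_deriv this ?_
    ring
  have hD1C : ContinuousOn D1 (Set.Icc 0 h) := by
    apply ContinuousOn.add
    · exact continuousOn_const.mul (continuousOn_const.sub hfC)
    · exact ((continuousOn_id.div_const 2).mul hf1C)
  -- integrability helpers
  have hf2intu : ∀ u ∈ Set.Icc (0:ℝ) h,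
      IntervalIntegrable (fun s => (s/2) * f2 s) volume 0 u := by
    intro u hu
    apply ContinuousOn.intervalIntegrable
    rw [Set.uIcc_of_le hu.1]
    exact (continuousOn_id.div_const 2).mul (hf2C.mono (Set.Icc_subset_Icc le_rfl hu.2))
  -- D1 u = ∫₀ᵘ (s/2) f2 s
  have hD1eq : ∀ u ∈ Set.Icc (0:ℝ) h, D1 u = ∫ s in (0:ℝ)..u, (s/2) * f2 s := by
    intro u hu
    have key := intervalIntegral.integral_eq_sub_of_hasDerivAt
      (f := D1) (f' := fun s => (s/2) * f2 s)
      (fun x hx => by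
        rw [Set.uIcc_of_le hu.1] at hx
        exact hD1deriv x (Set.Icc_subset_Icc le_rfl hu.2 hx))
      (hf2intu u hu)
    have hD10 : D1 0 = 0 := by simp [hD1def]
    rw [key, hD10, sub_zero]
  -- bound D1 on [0,t]
  have hGint : IntervalIntegrable G volume 0 t := by
    apply ContinuousOn.intervalIntegrable
    rw [Set.uIcc_of_le ht0]
    exact hGC.mono hIcc
  have hGintnn : 0 ≤ ∫ r in (0:ℝ)..t, G r :=
    intervalIntegral.integral_nonneg ht0 (fun r _ => hGnn r)
  have hD1bd : ∀ u ∈ Set.Icc (0:ℝ) t, D1 u ≤ (h/2) * ∫ r in (0:ℝ)..t, G r := by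
    intro u hu
    have hu' : u ∈ Set.Icc (0:ℝ) h := hIcc hu
    rw [hD1eq u hu']
    have step1 : (∫ s in (0:ℝ)..u, (s/2) * f2 s) ≤ ∫ s in (0:ℝ)..u, (h/2) * G s := by
      have hGint_u : IntervalIntegrable G volume 0 u := by
        apply ContinuousOn.intervalIntegrable
        rw [Set.uIcc_of_le hu'.1]
        exact hGC.mono (Set.Icc_subset_Icc le_rfl hu'.2)
      apply intervalIntegral.integral_mono_on hu'.1 (hf2intu u hu') (hGint_u.const_mul _)
      · intro s hs
        have hs' : s ∈ Set.Icc (0:ℝ) h := Set.Icc_subset_Icc le_rfl hu'.2 hs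
        have h1 := hf2G s hs'
        have h2 := hGnn s
        have key1 : s/2 * f2 s ≤ s/2 * G s :=
          mul_le_mul_of_nonneg_left h1 (by linarith [hs'.1])
        have key2 : s/2 * G s ≤ h/2 * G s :=
          mul_le_mul_of_nonneg_right (by linarith [hs'.2]) h2
        exact le_trans key1 key2
    have step2 : (∫ s in (0:ℝ)..u, (h/2) * G s) ≤ ∫ s in (0:ℝ)..t, (h/2) * G s := by
      apply intervalIntegral.integral_mono_interval le_rfl hu.1 hu.2
      · filter_upwards with s
        exact mul_nonneg (by positivity) (hGnn s)
      · exact hGint.const_mul _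
    calc (∫ s in (0:ℝ)..u, (s/2) * f2 s) ≤ ∫ s in (0:ℝ)..u, (h/2) * G s := step1
      _ ≤ ∫ s in (0:ℝ)..t, (h/2) * G s := step2
      _ = (h/2) * ∫ r in (0:ℝ)..t, G r := intervalIntegral.integral_const_mul _ _
  -- primitive of f and the defect function Ψ
  have hfint : ∀ u ∈ Set.Icc (0:ℝ) h, IntervalIntegrable f volume 0 u := by
    intro u hu
    apply ContinuousOn.intervalIntegrable
    rw [Set.uIcc_of_le hu.1]
    exact hfC.mono (Set.Icc_subset_Icc le_rfl hu.2)
  set P : ℝ → ℝ := fun u => ∫ s in (0:ℝ)..u, f s with hPdef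
  set Ψ : ℝ → ℝ := fun u => (u/2) * (f 0 + f u) - P u with hΨdef
  have hΨcont : ContinuousOn Ψ (Set.Icc 0 t) := by
    apply ContinuousOn.sub
    · exact (continuousOn_id.div_const 2).mul
        (continuousOn_const.add (hfC.mono hIcc))
    · have := intervalIntegral.continuousOn_primitive_interval
        (f := f) (μ := volume) (a := (0:ℝ)) (b := t)
        (by rw [Set.uIcc_of_le ht0]; exact (hfC.mono hIcc).integrableOn_Icc)
      rw [Set.uIcc_of_le ht0] at this
      exact this
  have hfCO : ContinuousOn f (Set.Ioo 0 h) :=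
    continuousOn_of_forall_continuousAt fun s hs =>
      ((hwA s (Set.Ioo_subset_Icc_self hs)).norm.pow 2 : ContinuousAt _ _)
  have hΨderiv : ∀ u ∈ Set.Ioo (0:ℝ) t, HasDerivWithinAt Ψ (D1 u) (Set.Ioi u) u := by
    intro u hu
    have hu' : u ∈ Set.Icc (0:ℝ) h := hIcc (Set.Ioo_subset_Icc_self hu)
    have huO : u ∈ Set.Ioo (0:ℝ) h := ⟨hu.1, lt_of_lt_of_le hu.2 hth⟩
    have hP : HasDerivAt P (f u) u := by
      apply intervalIntegral.integral_hasDerivAt_right (hfint u hu')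
        (hfCO.stronglyMeasurableAtFilter isOpen_Ioo u huO)
      exact (hwA u hu').norm.pow 2
    have h1 : HasDerivAt (fun v => (v/2) * (f 0 + f v))
        ((1/2) * (f 0 + f u) + (u/2) * f1 u) u := by
      have hid : HasDerivAt (fun v : ℝ => v/2) (1/2) u := by
        simpa using (hasDerivAt_id u).div_const 2
      have := hid.mul ((hasDerivAt_const u (f 0)).add (hfderiv u hu'))
      refine HasDerivAt.congr_deriv this ?_
      simp only [Pi.add_apply]
      ring
    have := (h1.sub hP)
    have heq : ((1/2) * (f 0 + f u) + (u/2) * f1 u) - f u = D1 u := by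
      simp only [hD1def]; ring
    rw [heq] at this
    exact this.hasDerivWithinAt
  have hD1int : IntervalIntegrable D1 volume 0 t := by
    apply ContinuousOn.intervalIntegrable
    rw [Set.uIcc_of_le ht0]
    exact hD1C.mono hIcc
  have hΨeq : (∫ u in (0:ℝ)..t, D1 u) = Ψ t := by
    have := intervalIntegral.integral_eq_sub_of_hasDeriv_right_of_le ht0 hΨcont hΨderiv hD1int
    have hΨ0 : Ψ 0 = 0 := by simp [hΨdef, hPdef]
    rw [this, hΨ0, sub_zero]
  -- LHS = Ψ t
  have hLHS : (∫ s in (0:ℝ)..t, ((1 / 2) * (‖w t‖ ^ 2 + ‖w 0‖ ^ 2) - ‖w s‖ ^ 2)) = Ψ t := by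
    have : (∫ s in (0:ℝ)..t, ((1 / 2) * (‖w t‖ ^ 2 + ‖w 0‖ ^ 2) - ‖w s‖ ^ 2))
        = (∫ _ in (0:ℝ)..t, (1 / 2) * (f t + f 0)) - ∫ s in (0:ℝ)..t, f s := by
      rw [← intervalIntegral.integral_sub intervalIntegrable_const (hfint t ⟨ht0, hth⟩)]
    rw [this]
    simp only [intervalIntegral.integral_const, smul_eq_mul, hΨdef, hPdef]
    ring
  rw [hLHS]
  -- finish
  have hfinal : Ψ t ≤ t * ((h/2) * ∫ r in (0:ℝ)..t, G r) := by
    rw [← hΨeq]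
    calc (∫ u in (0:ℝ)..t, D1 u) ≤ ∫ _ in (0:ℝ)..t, ((h/2) * ∫ r in (0:ℝ)..t, G r) := by
          apply intervalIntegral.integral_mono_on ht0 hD1int intervalIntegrable_const hD1bd
      _ = t * ((h/2) * ∫ r in (0:ℝ)..t, G r) := by
          simp [intervalIntegral.integral_const]
          ring
  have hRHS : (∫ r in (0:ℝ)..t,
      (7 * γ ^ 2 * ‖w r‖ ^ 2 + (11 / 2) * L_K * ⟪z r, K (z r)⟫_ℝ
        + 2 * L_K * ‖w r‖ ^ 2)) = ∫ r in (0:ℝ)..t, G r := rfl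
  rw [hRHS]
  nlinarith [hfinal, hGintnn, mul_nonneg (sub_nonneg.2 hth) hGintnn]
end
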